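/- Let X, Y, Z be normed spaces, and suppose (i, P) : Z → X and (j, Q) : Z → Y are projection-embedding pairs: i, j are isometric embeddings, ‖P‖ ≤ 1, ‖Q‖ ≤ 1, P∘i = id_Z, Q∘j = id_Z. Then there exist a normed space V, isometric embeddings i' : X → V, j' : Y → V, and norm-one projections P' : V → X, Q' : V → Y with P'∘i' = id_X, Q'∘j' = id_Y, such that i'∘i = j'∘j, P∘P' = Q∘Q', j∘P = Q'∘i', and i∘Q = P'∘j'. -/

import Mathlib

/-- amalgamation of projection-embedding pairs. -/
theorem stmt_13 {Z X Y : Type} [NormedAddCommGroup Z] [NormedSpace ℝ Z]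
    [NormedAddCommGroup X] [NormedSpace ℝ X]
    [NormedAddCommGroup Y] [NormedSpace ℝ Y]
    (i : Z →ₗ[ℝ] X) (P : X →ₗ[ℝ] Z)
    (j : Z →ₗ[ℝ] Y) (Q : Y →ₗ[ℝ] Z)
    (hi : ∀ z, ‖i z‖ = ‖z‖) (hP : ∀ x, ‖P x‖ ≤ ‖x‖) (hPi : ∀ z, P (i z) = z)
    (hj : ∀ z, ‖j z‖ = ‖z‖) (hQ : ∀ y, ‖Q y‖ ≤ ‖y‖) (hQj : ∀ z, Q (j z) = z) :
    ∃ (V : Type) (_ : NormedAddCommGroup V) (_ : NormedSpace ℝ V)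
      (i' : X →ₗ[ℝ] V) (P' : V →ₗ[ℝ] X) (j' : Y →ₗ[ℝ] V) (Q' : V →ₗ[ℝ] Y),
      (∀ x, ‖i' x‖ = ‖x‖) ∧ (∀ v, ‖P' v‖ ≤ ‖v‖) ∧ (∀ x, P' (i' x) = x) ∧
      (∀ y, ‖j' y‖ = ‖y‖) ∧ (∀ v, ‖Q' v‖ ≤ ‖v‖) ∧ (∀ y, Q' (j' y) = y) ∧
      (∀ z, i' (i z) = j' (j z)) ∧
      (∀ v, P (P' v) = Q (Q' v)) ∧
      (∀ x, Q' (i' x) = j (P x)) ∧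
      (∀ y, P' (j' y) = i (Q y)) := by
  classical
  -- `W` is the ℓ¹-sum of `X` and `Y`
  let W := WithLp 1 (X × Y)
  let eqv : W ≃ₗ[ℝ] X × Y := WithLp.linearEquiv 1 ℝ (X × Y)
  let toW : X × Y →ₗ[ℝ] W := (eqv.symm : X × Y →ₗ[ℝ] W)
  have heqv : ∀ a : X × Y, eqv (toW a) = a := fun a => eqv.apply_symm_apply a
  have heqv' : ∀ w : W, toW (eqv w) = w := fun w => eqv.symm_apply_apply w
  have hWnorm : ∀ a : X × Y, ‖toW a‖ = ‖a.1‖ + ‖a.2‖ := by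
    intro a
    have h := WithLp.prod_norm_eq_add (p := 1) (by norm_num) (toW a)
    simp at h; rw [h]; rfl
  have hWnorm' : ∀ w : W, ‖w‖ = ‖(eqv w).1‖ + ‖(eqv w).2‖ := by
    intro w
    conv_lhs => rw [← heqv' w]
    exact hWnorm _
  -- the diagonal submodule along which we glue
  let ρ : Z →ₗ[ℝ] W := toW ∘ₗ (LinearMap.prod i (-j))
  let S : Submodule ℝ W := LinearMap.range ρ
  -- the candidate projections, on `W`
  let P0 : W →ₗ[ℝ] X :=
    (LinearMap.fst ℝ X Y + i ∘ₗ Q ∘ₗ LinearMap.snd ℝ X Y) ∘ₗ (eqv : W →ₗ[ℝ] X × Y)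
  let Q0 : W →ₗ[ℝ] Y :=
    (j ∘ₗ P ∘ₗ LinearMap.fst ℝ X Y + LinearMap.snd ℝ X Y) ∘ₗ (eqv : W →ₗ[ℝ] X × Y)
  have hP0 : ∀ w : W, P0 w = (eqv w).1 + i (Q (eqv w).2) := fun w => rfl
  have hQ0 : ∀ w : W, Q0 w = j (P (eqv w).1) + (eqv w).2 := fun w => rfl
  have hP0norm : ∀ w : W, ‖P0 w‖ ≤ ‖w‖ := by
    intro w
    rw [hP0, hWnorm' w]
    calc ‖(eqv w).1 + i (Q (eqv w).2)‖ ≤ ‖(eqv w).1‖ + ‖i (Q (eqv w).2)‖ := norm_add_le _ _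
      _ ≤ ‖(eqv w).1‖ + ‖(eqv w).2‖ := by rw [hi]; exact add_le_add_right (hQ _) _
  have hQ0norm : ∀ w : W, ‖Q0 w‖ ≤ ‖w‖ := by
    intro w
    rw [hQ0, hWnorm' w]
    calc ‖j (P (eqv w).1) + (eqv w).2‖ ≤ ‖j (P (eqv w).1)‖ + ‖(eqv w).2‖ := norm_add_le _ _
      _ ≤ ‖(eqv w).1‖ + ‖(eqv w).2‖ := by rw [hj]; exact add_le_add_left (hP _) _
  -- `S` is the kernel of the continuous map `w ↦ (P0 w, Q0 w)`
  let T : W →ₗ[ℝ] X × Y := LinearMap.prod P0 Q0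
  have hρ : ∀ z, ρ z = toW (i z, -(j z)) := fun z => rfl
  have hSker : S = LinearMap.ker T := by
    apply le_antisymm
    · rintro w ⟨z, rfl⟩
      have hz : eqv (ρ z) = (i z, -(j z)) := by rw [hρ]; exact heqv _
      simp only [LinearMap.mem_ker, T, LinearMap.prod_apply, LinearMap.coe_prodMap,
        Function.prod, Prod.mk_eq_zero]
      constructor
      · rw [hP0, hz]; simp [hQj]
      · rw [hQ0, hz]; simp [hPi]
    · rintro w hw
      simp only [LinearMap.mem_ker, T, LinearMap.prod_apply, Function.prod, Prod.mk_eq_zero] at hw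
      obtain ⟨h1, h2⟩ := hw
      rw [hP0] at h1
      rw [hQ0] at h2
      set a := (eqv w).1 with ha'
      set b := (eqv w).2 with hb'
      have ha : a = -(i (Q b)) := eq_neg_of_add_eq_zero_left h1
      have hb : b = -(j (P a)) := eq_neg_of_add_eq_zero_right h2
      have hPa : P a = -(Q b) := by rw [ha, map_neg, hPi]
      have hjb : j (Q b) = b := by
        conv_rhs => rw [hb, hPa]
        simp
      refine ⟨-(Q b), ?_⟩
      have hpair : (i (-(Q b)), -(j (-(Q b)))) = eqv w := by
        have h1' : i (-(Q b)) = a := by rw [map_neg, ha]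
        have h2' : -(j (-(Q b))) = b := by rw [map_neg, neg_neg, hjb]
        rw [h1', h2', ha', hb']
      rw [hρ, hpair, heqv']
  have hSclosed : IsClosed (S : Set W) := by
    rw [hSker]
    have hTbound : ∀ w : W, ‖T w‖ ≤ 1 * ‖w‖ := by
      intro w
      rw [one_mul]
      have : T w = (P0 w, Q0 w) := rfl
      rw [this, Prod.norm_def]
      exact max_le (hP0norm w) (hQ0norm w)
    let Tc : W →L[ℝ] X × Y := T.mkContinuous 1 hTbound
    have : (LinearMap.ker T : Set W) = Tc ⁻¹' {0} := by
      ext w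
      simp only [SetLike.mem_coe, LinearMap.mem_ker, Set.mem_preimage, Set.mem_singleton_iff]
      rfl
    rw [this]
    exact IsClosed.preimage Tc.continuous isClosed_singleton
  haveI : IsClosed (S : Set W) := hSclosed
  -- the amalgam
  let V := W ⧸ S
  -- embeddings and projections
  let inX : X →ₗ[ℝ] W := toW ∘ₗ LinearMap.inl ℝ X Y
  let inY : Y →ₗ[ℝ] W := toW ∘ₗ LinearMap.inr ℝ X Y
  have hinX : ∀ x, inX x = toW (x, 0) := fun x => rfl
  have hinY : ∀ y, inY y = toW (0, y) := fun y => rfl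
  let i' : X →ₗ[ℝ] V := S.mkQ ∘ₗ inX
  let j' : Y →ₗ[ℝ] V := S.mkQ ∘ₗ inY
  have hSP0 : S ≤ LinearMap.ker P0 := by
    rw [hSker]
    intro w hw
    simp only [LinearMap.mem_ker, T, LinearMap.prod_apply, Function.prod, Prod.mk_eq_zero] at hw
    exact LinearMap.mem_ker.mpr hw.1
  have hSQ0 : S ≤ LinearMap.ker Q0 := by
    rw [hSker]
    intro w hw
    simp only [LinearMap.mem_ker, T, LinearMap.prod_apply, Function.prod, Prod.mk_eq_zero] at hw
    exact LinearMap.mem_ker.mpr hw.2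
  let P' : V →ₗ[ℝ] X := S.liftQ P0 hSP0
  let Q' : V →ₗ[ℝ] Y := S.liftQ Q0 hSQ0
  have hP'mk : ∀ w : W, P' (S.mkQ w) = P0 w := fun w => rfl
  have hQ'mk : ∀ w : W, Q' (S.mkQ w) = Q0 w := fun w => rfl
  have hmk : ∀ w : W, S.mkQ w = Submodule.Quotient.mk w := fun w => rfl
  -- projection norm bounds on the quotient
  have hP'norm : ∀ v : V, ‖P' v‖ ≤ ‖v‖ := by
    intro v
    refine le_of_forall_pos_le_add fun ε hε => ?_
    obtain ⟨m, hm, hmlt⟩ := Submodule.Quotient.norm_mk_lt v hε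
    have : P' v = P0 m := by rw [← hm, ← hmk, hP'mk]
    rw [this]
    exact (hP0norm m).trans hmlt.le
  have hQ'norm : ∀ v : V, ‖Q' v‖ ≤ ‖v‖ := by
    intro v
    refine le_of_forall_pos_le_add fun ε hε => ?_
    obtain ⟨m, hm, hmlt⟩ := Submodule.Quotient.norm_mk_lt v hε
    have : Q' v = Q0 m := by rw [← hm, ← hmk, hQ'mk]
    rw [this]
    exact (hQ0norm m).trans hmlt.le
  -- key compatibility computations
  have hP'i' : ∀ x, P' (i' x) = x := by
    intro x
    have : i' x = S.mkQ (inX x) := rfl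
    rw [this, hP'mk, hinX, hP0, heqv]
    simp
  have hQ'j' : ∀ y, Q' (j' y) = y := by
    intro y
    have : j' y = S.mkQ (inY y) := rfl
    rw [this, hQ'mk, hinY, hQ0, heqv]
    simp
  have hQ'i' : ∀ x, Q' (i' x) = j (P x) := by
    intro x
    have : i' x = S.mkQ (inX x) := rfl
    rw [this, hQ'mk, hinX, hQ0, heqv]
    simp
  have hP'j' : ∀ y, P' (j' y) = i (Q y) := by
    intro y
    have : j' y = S.mkQ (inY y) := rfl
    rw [this, hP'mk, hinY, hP0, heqv]
    simp
  -- isometry of the embeddings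
  have hi' : ∀ x, ‖i' x‖ = ‖x‖ := by
    intro x
    refine le_antisymm ?_ ?_
    · have h1 : ‖i' x‖ ≤ ‖inX x‖ := by
        have : i' x = Submodule.Quotient.mk (inX x) := rfl
        rw [this]
        exact Submodule.Quotient.norm_mk_le S _
      have h2 : ‖inX x‖ = ‖x‖ := by rw [hinX, hWnorm]; simp
      rw [← h2]; exact h1
    · calc ‖x‖ = ‖P' (i' x)‖ := by rw [hP'i']
        _ ≤ ‖i' x‖ := hP'norm _
  have hj' : ∀ y, ‖j' y‖ = ‖y‖ := by
    intro y
    refine le_antisymm ?_ ?_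
    · have h1 : ‖j' y‖ ≤ ‖inY y‖ := by
        have : j' y = Submodule.Quotient.mk (inY y) := rfl
        rw [this]
        exact Submodule.Quotient.norm_mk_le S _
      have h2 : ‖inY y‖ = ‖y‖ := by rw [hinY, hWnorm]; simp
      rw [← h2]; exact h1
    · calc ‖y‖ = ‖Q' (j' y)‖ := by rw [hQ'j']
        _ ≤ ‖j' y‖ := hQ'norm _
  -- commutativity of the square
  have hsquare : ∀ z, i' (i z) = j' (j z) := by
    intro z
    have h1 : i' (i z) = Submodule.Quotient.mk (inX (i z)) := rfl
    have h2 : j' (j z) = Submodule.Quotient.mk (inY (j z)) := rfl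
    rw [h1, h2, Submodule.Quotient.eq]
    refine ⟨z, ?_⟩
    rw [hρ, hinX, hinY, ← map_sub]
    congr 1
    simp [Prod.ext_iff]
  -- the projections agree after composing down to `Z`
  have hproj : ∀ v : V, P (P' v) = Q (Q' v) := by
    intro v
    obtain ⟨w, rfl⟩ := Submodule.Quotient.mk_surjective S v
    rw [← hmk, hP'mk, hQ'mk, hP0, hQ0]
    simp [hPi, hQj]
  exact ⟨V, inferInstance, inferInstance, i', P', j', Q',
    hi', hP'norm, hP'i', hj', hQ'norm, hQ'j', hsquare, hproj, hQ'i', hP'j'⟩
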